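/- For the asymmetric limited-magnitude channel over [q]^n with n ≥ 1, the weight assignment w_i = 1/(n - i_0 + 1 + (i_1 - 1)/(2(n - i_0))) for compositions i = (i_0,...,i_{q-1}) of n with i_0 ≠ n, and w_i = 1 if i_0 = n, is a fractional transversal: for every composition i of n, w_i + Σ_{k=1}^{q-1} i_k · w_{i^{(k)}} ≥ 1, where i^{(k)} is obtained from i by decreasing i_k by 1 and increasing i_{k-1} by 1. -/

import Mathlib

/-- The weight assigned to the equivalence class of words of `[q]^n` with
composition `i` (where `i j` is the number of coordinates equal to `j`):
`w_i = 1` if `i_0 = n`, and otherwise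
`w_i = 1/(n - i_0 + 1 + (i_1 - 1)/(2(n - i_0)))`. -/
noncomputable def wA (n : ℕ) (i : ℕ → ℕ) : ℝ :=
  if i 0 = n then 1
  else 1 / ((n : ℝ) - (i 0 : ℝ) + 1 + ((i 1 : ℝ) - 1) / (2 * ((n : ℝ) - (i 0 : ℝ))))

/-- The composition obtained from `i` by a single asymmetric magnitude-1 error on
a symbol of value `k ≥ 1`: decrease `i_k` by 1 and increase `i_{k-1}` by 1. -/
def decClass (i : ℕ → ℕ) (k : ℕ) : ℕ → ℕ :=
  fun j => if j = k then i j - 1 else if j + 1 = k then i j + 1 else i j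

lemma core (s a b c W1 W2 : ℝ) (hs : 1 ≤ s) (ha : 0 ≤ a) (hb : 0 ≤ b) (hc : 0 ≤ c)
    (habc : a + b + c = s)
    (hW2 : W2 = 1/(s + 1 + (a + 1 - 1)/(2*s)))
    (hW1 : a ≠ 0 → 1 ≤ a ∧ ((s = 1 ∧ W1 = 1) ∨
        (2 ≤ s ∧ W1 = 1/(s - 1 + 1 + (a - 1 - 1)/(2*(s - 1)))))) :
    1 ≤ 1/(s + 1 + (a - 1)/(2*s)) + (a * W1 + (b * W2 + c * (1/(s + 1 + (a - 1)/(2*s))))) := by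
  have hs0 : 0 < s := by linarith
  have e0 : s + 1 + (a-1)/(2*s) = (2*s^2+2*s+a-1)/(2*s) := by field_simp; ring
  have e2 : s + 1 + (a+1-1)/(2*s) = (2*s^2+2*s+a)/(2*s) := by field_simp; ring
  have hN0 : 0 < 2*s^2+2*s+a-1 := by nlinarith
  have hN2 : 0 < 2*s^2+2*s+a := by nlinarith
  rw [hW2, e0, e2, one_div_div, one_div_div]
  by_cases ha0 : a = 0
  · have hw1 : a * W1 = 0 := by rw [ha0]; ring
    have k1 : 2*s/(2*s^2+2*s+a) ≤ 2*s/(2*s^2+2*s+a-1) := by gcongr <;> linarith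
    have k2 : c * (2*s/(2*s^2+2*s+a)) ≤ c * (2*s/(2*s^2+2*s+a-1)) := by gcongr <;> linarith
    have k3 : 2*s/(2*s^2+2*s+a) + (b * (2*s/(2*s^2+2*s+a)) + c * (2*s/(2*s^2+2*s+a))) = 1 := by
      field_simp
      linear_combination 2*s*habc - (2*s+1)*ha0
    linarith
  · obtain ⟨ha1, hcase⟩ := hW1 ha0
    rcases hcase with ⟨hseq, hW1e⟩ | ⟨hs2, hW1e⟩
    · have hb0 : b = 0 := by linarith
      have hc0 : c = 0 := by linarith
      have t1 : 0 ≤ 2*s/(2*s^2+2*s+a-1) := by positivity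
      have t2 : 0 ≤ 2*s/(2*s^2+2*s+a) := by positivity
      rw [hW1e, mul_one, hb0, hc0]
      nlinarith
    · have hN1 : 0 < 2*s^2-2*s+a-2 := by nlinarith
      have hs1 : (0:ℝ) < s - 1 := by linarith
      have e1 : s - 1 + 1 + (a-1-1)/(2*(s-1)) = (2*s^2-2*s+a-2)/(2*(s-1)) := by
        field_simp; ring
      rw [hW1e, e1, one_div_div]
      have key : 1 ≤ (1+s-a)*(2*s)/(2*s^2+2*s+a) + a*(2*(s-1))/(2*s^2-2*s+a-2) := by
        rw [div_add_div _ _ hN2.ne' hN1.ne', le_div_iff₀ (mul_pos hN2 hN1)]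
        nlinarith [mul_nonneg ha (show (0:ℝ) ≤ 2+2*s+2*s^2-3*a by nlinarith)]
      have k1 : 2*s/(2*s^2+2*s+a) ≤ 2*s/(2*s^2+2*s+a-1) := by gcongr <;> linarith
      have k2 : c * (2*s/(2*s^2+2*s+a)) ≤ c * (2*s/(2*s^2+2*s+a-1)) := by gcongr <;> linarith
      have k3 : (1+s-a)*(2*s)/(2*s^2+2*s+a)
          = 2*s/(2*s^2+2*s+a) + (b * (2*s/(2*s^2+2*s+a)) + c * (2*s/(2*s^2+2*s+a))) := by
        field_simp
        linear_combination (-1)*habc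
      have k4 : a * (2*(s-1)/(2*s^2-2*s+a-2)) = a*(2*(s-1))/(2*s^2-2*s+a-2) := by ring
      linarith

/-- **Improved fractional transversal for the asymmetric limited-magnitude
channel.** For every composition `i = (i_0, …, i_{q-1})` of `n`,
`w_i + ∑_{k=1}^{q-1} i_k · w_{i^{(k)}} ≥ 1`. -/
theorem asym_limited_magnitude_fractional_transversal (n q : ℕ)
    (hn : 1 ≤ n) (hq : 2 ≤ q) :
    ∀ i : ℕ → ℕ, (∑ j ∈ Finset.range q, i j = n) → (∀ j, q ≤ j → i j = 0) →
      1 ≤ wA n i + ∑ k ∈ Finset.Ico 1 q, (i k : ℝ) * wA n (decClass i k) := by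
  intro i hsum hzero
  by_cases h0 : i 0 = n
  · have hsplit : i 0 + ∑ k ∈ Finset.Ico 1 q, i k = n := by
      rw [← hsum, Finset.range_eq_Ico, Finset.sum_eq_sum_Ico_succ_bot (by omega : 0 < q)]
    have hz : ∑ k ∈ Finset.Ico 1 q, i k = 0 := by omega
    have hzero' : ∀ k ∈ Finset.Ico 1 q, i k = 0 := by
      intro k hk
      exact (Finset.sum_eq_zero_iff).1 hz k hk
    have : ∑ k ∈ Finset.Ico 1 q, (i k : ℝ) * wA n (decClass i k) = 0 :=
      Finset.sum_eq_zero fun k hk => by rw [hzero' k hk]; simp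
    rw [this, wA, if_pos h0]
    norm_num
  · -- i 0 < n
    have hi0le : i 0 ≤ n := by
      rw [← hsum]
      exact Finset.single_le_sum (fun j _ => Nat.zero_le _) (Finset.mem_range.2 (by omega))
    have hi0 : i 0 < n := lt_of_le_of_ne hi0le h0
    -- decomposition of n
    have hdec : i 0 + i 1 + i 2 + ∑ k ∈ Finset.Ico 3 q, i k = n := by
      rcases Nat.lt_or_ge q 3 with hq3 | hq3
      · have hq2 : q = 2 := by omega
        subst hq2
        have h2 : i 2 = 0 := hzero 2 le_rfl
        rw [Finset.Ico_eq_empty (by omega)] at *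
        simp only [Finset.sum_empty, add_zero, h2]
        rw [← hsum]
        simp [Finset.sum_range_succ]
      · have h3 : ∑ j ∈ Finset.range q, i j
            = i 0 + (i 1 + (i 2 + ∑ k ∈ Finset.Ico 3 q, i k)) := by
          rw [Finset.range_eq_Ico, Finset.sum_eq_sum_Ico_succ_bot (by omega),
            Finset.sum_eq_sum_Ico_succ_bot (by omega), Finset.sum_eq_sum_Ico_succ_bot (by omega)]
        rw [h3] at hsum
        omega
    -- i 1 ≤ n - i 0 etc. from hdec
    -- wA is determined by coordinates 0 and 1
    have hfix : ∀ k, 3 ≤ k → wA n (decClass i k) = wA n i := by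
      intro k hk
      have e0 : decClass i k 0 = i 0 := by
        simp only [decClass]
        rw [if_neg (by omega), if_neg (by omega)]
      have e1 : decClass i k 1 = i 1 := by
        simp only [decClass]
        rw [if_neg (by omega), if_neg (by omega)]
      simp only [wA, e0, e1]
    have hsum' : ∑ k ∈ Finset.Ico 1 q, (i k : ℝ) * wA n (decClass i k)
        = (i 1 : ℝ) * wA n (decClass i 1) + ((i 2 : ℝ) * wA n (decClass i 2)
          + (∑ k ∈ Finset.Ico 3 q, (i k : ℝ)) * wA n i) := by
      rcases Nat.lt_or_ge q 3 with hq3 | hq3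
      · have hq2 : q = 2 := by omega
        subst hq2
        have h2 : i 2 = 0 := hzero 2 le_rfl
        rw [Finset.Ico_eq_empty (by omega : ¬ (3:ℕ) < 2)]
        rw [show Finset.Ico 1 2 = {1} by rfl]
        simp [h2]
      · rw [Finset.sum_eq_sum_Ico_succ_bot (by omega : 1 < q),
          Finset.sum_eq_sum_Ico_succ_bot (by omega : 2 < q)]
        congr 1
        congr 1
        rw [Finset.sum_mul]
        exact Finset.sum_congr rfl fun k hk => by
          rw [hfix k (Finset.mem_Ico.1 hk).1]
    -- the value of wA n i
    have hw : wA n i = 1 / ((n : ℝ) - (i 0 : ℝ) + 1 + ((i 1 : ℝ) - 1) / (2 * ((n : ℝ) - (i 0 : ℝ)))) := by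
      simp only [wA, if_neg h0]
    -- value at decClass i 2
    have hd2 : wA n (decClass i 2)
        = 1 / ((n : ℝ) - (i 0 : ℝ) + 1 + (((i 1 : ℝ) + 1) - 1) / (2 * ((n : ℝ) - (i 0 : ℝ)))) := by
      have e0 : decClass i 2 0 = i 0 := by simp [decClass]
      have e1 : decClass i 2 1 = i 1 + 1 := by simp [decClass]
      simp only [wA, e0, e1, if_neg h0]
      push_cast
      ring
    rw [hsum', hw]
    refine core ((n : ℝ) - (i 0 : ℝ)) (i 1 : ℝ) (i 2 : ℝ) (∑ k ∈ Finset.Ico 3 q, (i k : ℝ))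
      (wA n (decClass i 1)) (wA n (decClass i 2)) ?_ (by positivity) (by positivity) ?_ ?_ ?_ ?_
    · -- 1 ≤ s
      have : (i 0 : ℝ) + 1 ≤ n := by exact_mod_cast hi0
      linarith
    · exact Finset.sum_nonneg fun k _ => by positivity
    · -- a + b + c = s
      have : ((i 0 : ℕ) : ℝ) + (i 1 : ℝ) + (i 2 : ℝ) + (∑ k ∈ Finset.Ico 3 q, (i k : ℝ)) = (n : ℝ) := by
        rw [← Nat.cast_sum]
        exact_mod_cast congrArg (Nat.cast : ℕ → ℝ) hdec
      linarith
    · exact hd2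
    · -- the W1 hypothesis
      intro ha0
      have h1 : 1 ≤ i 1 := by
        by_contra h
        exact ha0 (by simp [Nat.lt_one_iff.1 (not_le.1 h)])
      refine ⟨by exact_mod_cast h1, ?_⟩
      have e0 : decClass i 1 0 = i 0 + 1 := by simp [decClass]
      have e1 : decClass i 1 1 = i 1 - 1 := by simp [decClass]
      by_cases hcond : i 0 + 1 = n
      · left
        constructor
        · have : ((i 0 : ℕ) : ℝ) + 1 = (n : ℝ) := by exact_mod_cast hcond
          linarith
        · simp only [wA, e0, if_pos hcond]
      · right
        constructor
        · have : i 0 + 2 ≤ n := by omega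
          have : ((i 0 : ℕ) : ℝ) + 2 ≤ (n : ℝ) := by exact_mod_cast this
          linarith
        · simp only [wA, e0, e1, if_neg hcond]
          rw [Nat.cast_sub h1]
          push_cast
          ring
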